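/- Let R be a p-nilpotent ring (p^N = 0 in R for some N). Then the ring of F-invariants W(R)^{F = id} of the p-typical Witt vectors is naturally isomorphic to the ring of continuous (locally constant on quasi-compact opens) functions from the topological space Spec(R) to Z_p. -/

import Mathlib

set_option synthInstance.maxHeartbeats 1000000
set_option maxHeartbeats 1000000
set_option linter.unusedVariables false
set_option linter.unusedSectionVars false
set_option linter.unnecessarySimpa false
set_option linter.deprecated false
open WittVector MvPolynomial

open MvPolynomial in
theorem aux5_aeval_mem {σ : Type*} [DecidableEq σ] {R : Type*} [CommRing R] (φ : MvPolynomial σ ℤ)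
    (h : constantCoeff φ = 0) (I : Ideal R) (c : σ → R) (hc : ∀ i, c i ∈ I) :
    aeval c φ ∈ I := by
  rw [aeval_def, eval₂_eq]
  refine Ideal.sum_mem _ fun d hd => ?_
  have hd0 : d ≠ 0 := by
    rintro rfl
    exact (MvPolynomial.mem_support_iff.mp hd) h
  obtain ⟨i, hi⟩ : ∃ i, d i ≠ 0 := by
    by_contra hcon
    push_neg at hcon
    exact hd0 (Finsupp.ext hcon)
  have hmem : (∏ j ∈ d.support, c j ^ d j) ∈ I := by
    have : i ∈ d.support := Finsupp.mem_support_iff.mpr hi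
    rw [← Finset.mul_prod_erase _ _ this]
    exact Ideal.mul_mem_right _ _ (Ideal.pow_mem_of_mem I (hc i) _ (Nat.pos_of_ne_zero hi))
  exact Ideal.mul_mem_left _ _ hmem


theorem aux5_constantCoeff_frobeniusPoly (p : ℕ) [Fact p.Prime] (n : ℕ) :
    constantCoeff (frobeniusPoly p n) = 0 := by
  have h0 : ((0 : WittVector p ℤ).coeff) = fun _ => (0:ℤ) := by
    funext k; exact WittVector.zero_coeff p ℤ k
  have := WittVector.coeff_frobenius (p := p) (0 : WittVector p ℤ) n
  rw [map_zero, WittVector.zero_coeff, h0] at this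
  rw [show (fun _ => (0:ℤ)) = (0 : ℕ → ℤ) from rfl, aeval_zero] at this
  simpa using this.symm

theorem aux5_frobeniusPoly_eq (p : ℕ) [Fact p.Prime] (n : ℕ) :
    frobeniusPoly p n = X n ^ p + C (p : ℤ) * frobeniusPolyAux p n := rfl


theorem aux5_frobeniusPoly_eq' (p : ℕ) [Fact p.Prime] (n : ℕ) :
    frobeniusPoly p n = X n ^ p + C (p : ℤ) * frobeniusPolyAux p n := rfl

theorem aux5_constantCoeff_frobeniusPolyAux (p : ℕ) [hp : Fact p.Prime] (n : ℕ)
    (h : constantCoeff (frobeniusPoly p n) = 0) :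
    constantCoeff (frobeniusPolyAux p n) = 0 := by
  rw [aux5_frobeniusPoly_eq'] at h
  simp only [map_add, map_mul, map_pow, constantCoeff_X, constantCoeff_C] at h
  have hpn : (p:ℤ) ≠ 0 := Int.natCast_ne_zero.mpr hp.1.ne_zero
  have := hp.1.pos
  rw [zero_pow (by omega), zero_add] at h
  exact (mul_eq_zero.mp h).resolve_left hpn

theorem aux5_coeff_frobenius_mem (p : ℕ) [hp : Fact p.Prime] {R : Type} [CommRing R]
    (J : Ideal R) (hpJ : (p : R) ∈ J) (k : ℕ) (hk : 1 ≤ k)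
    (x : WittVector p R) (hx : ∀ n, x.coeff n ∈ J ^ k) :
    ∀ n, (WittVector.frobenius x).coeff n ∈ J ^ (k + 1) := by
  intro n
  rw [WittVector.coeff_frobenius, aux5_frobeniusPoly_eq', map_add, map_mul, map_pow, aeval_X]
  refine Ideal.add_mem _ ?_ ?_
  · have h2 : x.coeff n ^ p = x.coeff n ^ (p-1) * x.coeff n := by
      rw [← pow_succ]; congr 1; have := hp.1.two_le; omega
    have hm := Ideal.mul_mem_mul
      (Ideal.pow_mem_of_mem _ (hx n) (p-1) (by have := hp.1.two_le; omega)) (hx n)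
    rw [← pow_add] at hm
    rw [h2]
    exact Ideal.pow_le_pow_right (by omega) hm
  · have h1 : (aeval x.coeff) (C (p:ℤ)) = (p : R) := by
      simp [algebraMap_int_eq]
    rw [h1]
    have hmem : aeval x.coeff (frobeniusPolyAux p n) ∈ J ^ k := aux5_aeval_mem _ (aux5_constantCoeff_frobeniusPolyAux p n (aux5_constantCoeff_frobeniusPoly p n)) _ _ hx
    have := Ideal.mul_mem_mul hpJ hmem
    rwa [← pow_succ'] at this


section deform
variable (p : ℕ) [hp : Fact p.Prime] {R S : Type} [CommRing R] [CommRing S]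
  (f : R →+* S) (hf : Function.Surjective f)
  (hker : RingHom.ker f = Ideal.span {(p : R)})
  (N : ℕ) (hN : 1 ≤ N) (hpN : (p : R) ^ N = 0)

theorem aux5_iter_mem (x : WittVector p R) (hx : ∀ n, x.coeff n ∈ Ideal.span {(p:R)}) :
    ∀ k n, ((WittVector.frobenius)^[k] x).coeff n ∈ (Ideal.span {(p:R)}) ^ (k+1) := by
  intro k
  induction k with
  | zero => simpa using hx
  | succ k ih =>
    intro n
    rw [Function.iterate_succ_apply']
    exact aux5_coeff_frobenius_mem p _ (Ideal.mem_span_singleton_self _) (k+1) (by omega) _ ih n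

include hpN in
theorem aux5_span_pow_bot : (Ideal.span {(p:R)}) ^ N = ⊥ := by
  rw [Ideal.span_singleton_pow, hpN, Ideal.span_singleton_eq_bot.mpr rfl]

include hN hpN in
theorem aux5_iter_zero (x : WittVector p R) (hx : ∀ n, x.coeff n ∈ Ideal.span {(p:R)}) :
    (WittVector.frobenius)^[N] x = 0 := by
  ext n
  have h1 := aux5_iter_mem p x hx N n
  have hle : (Ideal.span {(p:R)}) ^ (N+1) ≤ (Ideal.span {(p:R)}) ^ N :=
    Ideal.pow_le_pow_right (by omega)
  rw [aux5_span_pow_bot p N hpN] at hle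
  rw [WittVector.zero_coeff]
  simpa using hle h1

include hN hpN in
theorem aux5_inj_aux (x : WittVector p R) (hfix : WittVector.frobenius x = x)
    (hx : ∀ n, x.coeff n ∈ Ideal.span {(p:R)}) : x = 0 := by
  have key : ∀ k, 1 ≤ k → ∀ n, x.coeff n ∈ (Ideal.span {(p:R)}) ^ k := by
    intro k
    induction k with
    | zero => omega
    | succ k ih =>
      intro _ n
      rcases Nat.lt_or_ge k 1 with h | h
      · interval_cases k
        · simpa using hx n
      · have h2 := aux5_coeff_frobenius_mem p _ (Ideal.mem_span_singleton_self _) k h x (ih h) n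
        rwa [hfix] at h2
  ext n
  have h3 := key N hN n
  rw [aux5_span_pow_bot p N hpN] at h3
  rw [WittVector.zero_coeff]
  simpa using h3

include hker in
theorem aux5_ker_coeff (x : WittVector p R) (hx : WittVector.map f x = 0) :
    ∀ n, x.coeff n ∈ Ideal.span {(p:R)} := by
  intro n
  rw [← hker, RingHom.mem_ker]
  have := congrArg (fun z => WittVector.coeff z n) hx
  simpa [WittVector.map_coeff] using this

theorem aux5_comm (x : WittVector p R) :
    WittVector.map f (WittVector.frobenius x) = WittVector.frobenius (WittVector.map f x) :=
  (WittVector.frobenius_isPoly p).map f x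

/-- restricted hom -/
noncomputable def aux5_fixHom :
    (RingHom.eqLocus (WittVector.frobenius : WittVector p R →+* WittVector p R)
        (RingHom.id (WittVector p R))) →+*
    (RingHom.eqLocus (WittVector.frobenius : WittVector p S →+* WittVector p S)
        (RingHom.id (WittVector p S))) :=
  RingHom.codRestrict
    ((WittVector.map f).comp (Subring.subtype _)) _
    (fun x => by
      show WittVector.frobenius (WittVector.map f x.1) = WittVector.map f x.1
      rw [← aux5_comm]
      exact congrArg _ x.2)

include hf hker hN hpN in
theorem aux5_fixHom_bijective : Function.Bijective (aux5_fixHom p f) := by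
  constructor
  · rintro ⟨x, hx⟩ ⟨x', hx'⟩ h
    have hval : WittVector.map f x = WittVector.map f x' := congrArg Subtype.val h
    have h0 : WittVector.map f (x - x') = 0 := by rw [map_sub, hval, sub_self]
    have hfix : WittVector.frobenius (x - x') = x - x' := by
      rw [map_sub]; rw [show WittVector.frobenius x = x from hx,
        show WittVector.frobenius x' = x' from hx']
    have := aux5_inj_aux p N hN hpN (x - x') hfix (aux5_ker_coeff p f hker _ h0)
    exact Subtype.ext (sub_eq_zero.mp this)
  · rintro ⟨y, hy⟩
    obtain ⟨x₀, hx₀⟩ := WittVector.map_surjective f hf y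
    set d : WittVector p R := WittVector.frobenius x₀ - x₀ with hd
    have hdker : WittVector.map f d = 0 := by
      rw [hd, map_sub, aux5_comm, hx₀, show WittVector.frobenius y = y from hy, sub_self]
    have hdcoeff := aux5_ker_coeff p f hker d hdker
    set z : WittVector p R := ∑ k ∈ Finset.range (N+1), (WittVector.frobenius)^[k] d with hz
    refine ⟨⟨x₀ + z, ?_⟩, ?_⟩
    · show WittVector.frobenius (x₀ + z) = x₀ + z
      have hFz : WittVector.frobenius z = ∑ k ∈ Finset.range (N+1),
          (WittVector.frobenius)^[k+1] d := by
        rw [hz, map_sum]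
        exact Finset.sum_congr rfl fun k _ => by rw [Function.iterate_succ_apply']
      have htel : WittVector.frobenius z - z = (WittVector.frobenius)^[N+1] d - d := by
        rw [hFz, hz, ← Finset.sum_sub_distrib,
          Finset.sum_range_sub (fun k => (WittVector.frobenius)^[k] d)]
        simp
      have hvanish : (WittVector.frobenius)^[N+1] d = 0 := by
        rw [Function.iterate_succ_apply]
        refine aux5_iter_zero p N hN hpN _ (fun n => ?_)
        have h5 := aux5_iter_mem p d hdcoeff 1 n
        rw [Function.iterate_one] at h5
        have hle : (Ideal.span {(p:R)}) ^ (1+1) ≤ (Ideal.span {(p:R)}) ^ 1 :=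
          Ideal.pow_le_pow_right (by omega)
        rw [pow_one] at hle
        exact hle h5
      have hkey : WittVector.frobenius (x₀ + z) - (x₀ + z) = 0 := by
        have h6 : WittVector.frobenius (x₀ + z) - (x₀ + z)
            = d + (WittVector.frobenius z - z) := by rw [map_add, hd]; ring
        rw [h6, htel, hvanish]; ring
      linear_combination (norm := abel) hkey
    · have hmapiter : ∀ k, WittVector.map f ((WittVector.frobenius)^[k] d) = 0 := by
        intro k
        induction k with
        | zero => simpa using hdker
        | succ k ih => rw [Function.iterate_succ_apply', aux5_comm, ih, map_zero]
      have hzker : WittVector.map f z = 0 := by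
        rw [hz, map_sum]
        exact Finset.sum_eq_zero fun k _ => hmapiter k
      exact Subtype.ext (by show WittVector.map f (x₀ + z) = y
                            rw [map_add, hx₀, hzker, add_zero])

noncomputable def aux5_fixEquiv (hf : Function.Surjective f)
    (hker : RingHom.ker f = Ideal.span {(p : R)}) (hN : 1 ≤ N) (hpN : (p : R) ^ N = 0) :
    (RingHom.eqLocus (WittVector.frobenius : WittVector p R →+* WittVector p R)
        (RingHom.id (WittVector p R))) ≃+*
    (RingHom.eqLocus (WittVector.frobenius : WittVector p S →+* WittVector p S)
        (RingHom.id (WittVector p S))) :=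
  RingEquiv.ofBijective (aux5_fixHom p f) (aux5_fixHom_bijective p f hf hker N hN hpN)
end deform


section charp
variable (p : ℕ) [hp : Fact p.Prime] {S : Type} [CommRing S] [CharP S p]

theorem aux5_charP_quot (𝔭 : PrimeSpectrum S) : CharP (S ⧸ 𝔭.asIdeal) p := by
  haveI := 𝔭.2
  haveI : Nontrivial (S ⧸ 𝔭.asIdeal) := Ideal.Quotient.nontrivial_iff.mpr 𝔭.2.ne_top
  rw [CharP.charP_iff_prime_eq_zero hp.1]
  rw [← map_natCast (Ideal.Quotient.mk 𝔭.asIdeal) p, CharP.cast_eq_zero S p, map_zero]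

theorem aux5_domain_quot (𝔭 : PrimeSpectrum S) : IsDomain (S ⧸ 𝔭.asIdeal) := by
  haveI := 𝔭.2
  infer_instance

theorem aux5_root_zmod {D : Type} [CommRing D] [IsDomain D] [CharP D p] (a : D)
    (ha : a ^ p = a) : ∃ i : ZMod p, ZMod.castHom (dvd_refl p) D i = a := by
  classical
  have hcard : Fintype.card (ZMod p) = p := ZMod.card p
  have hroots := FiniteField.roots_X_pow_card_sub_X (ZMod p)
  rw [hcard] at hroots
  have hdeg : (Polynomial.X ^ p - Polynomial.X : Polynomial (ZMod p)).natDegree = p :=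
    FiniteField.X_pow_card_sub_X_natDegree_eq (ZMod p) hp.1.one_lt
  have hsplits : Polynomial.Splits
      (Polynomial.X ^ p - Polynomial.X : Polynomial (ZMod p)) := by
    rw [Polynomial.splits_iff_card_roots, hroots, hdeg]
    simpa using hcard
  have hmonic : (Polynomial.X ^ p - Polynomial.X : Polynomial (ZMod p)).Monic := by
    have hle : (Polynomial.X : Polynomial (ZMod p)).degree < ((p : ℕ) : WithBot ℕ) := by
      rw [Polynomial.degree_X]
      exact_mod_cast hp.1.one_lt
    exact Polynomial.monic_X_pow_sub hle
  have hfact := hsplits.eq_prod_roots_of_monic hmonic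
  rw [hroots] at hfact
  have heval : (Multiset.map (fun i : ZMod p => a - ZMod.castHom (dvd_refl p) D i) Finset.univ.val).prod
      = 0 := by
    have h1 := congrArg (fun q => Polynomial.eval a (Polynomial.map (ZMod.castHom (dvd_refl p) D) q))
      hfact
    simp only [Polynomial.map_sub, Polynomial.map_pow, Polynomial.map_X, Polynomial.eval_sub,
      Polynomial.eval_pow, Polynomial.eval_X, Polynomial.map_multiset_prod,
      Polynomial.eval_multiset_prod, Multiset.map_map, Function.comp_apply,
      Polynomial.map_C, Polynomial.eval_C] at h1
    rw [ha, sub_self] at h1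
    exact h1.symm
  rw [Multiset.prod_eq_zero_iff] at heval
  obtain ⟨i, _, hi⟩ := Multiset.mem_map.mp heval
  exact ⟨i, (sub_eq_zero.mp hi).symm⟩
end charp

section charp2
variable (p : ℕ) [hp : Fact p.Prime] {S : Type} [CommRing S] [CharP S p]

instance aux5_instCharP (𝔭 : PrimeSpectrum S) : CharP (S ⧸ 𝔭.asIdeal) p :=
  aux5_charP_quot p 𝔭

instance aux5_instDomain (𝔭 : PrimeSpectrum S) : IsDomain (S ⧸ 𝔭.asIdeal) :=
  aux5_domain_quot 𝔭

instance aux5_instNontriv (𝔭 : PrimeSpectrum S) : Nontrivial (S ⧸ 𝔭.asIdeal) :=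
  Ideal.Quotient.nontrivial_iff.mpr 𝔭.2.ne_top

theorem aux5_fix_coeff (x : WittVector p S) (h : WittVector.frobenius x = x) :
    ∀ n, x.coeff n ^ p = x.coeff n := by
  intro n
  conv_rhs => rw [← h]
  rw [WittVector.coeff_frobenius_charP]

open Classical in
noncomputable def aux5_c (x : WittVector p S) (𝔭 : PrimeSpectrum S) (n : ℕ) : ZMod p :=
  if h : ∃ i : ZMod p, (ZMod.castHom (dvd_refl p) (S ⧸ 𝔭.asIdeal)) i
      = Ideal.Quotient.mk 𝔭.asIdeal (x.coeff n) then h.choose else 0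

theorem aux5_c_spec (x : WittVector p S) (hx : ∀ n, x.coeff n ^ p = x.coeff n)
    (𝔭 : PrimeSpectrum S) (n : ℕ) :
    (ZMod.castHom (dvd_refl p) (S ⧸ 𝔭.asIdeal)) (aux5_c p x 𝔭 n)
      = Ideal.Quotient.mk 𝔭.asIdeal (x.coeff n) := by
  have hex : ∃ i : ZMod p, (ZMod.castHom (dvd_refl p) (S ⧸ 𝔭.asIdeal)) i
      = Ideal.Quotient.mk 𝔭.asIdeal (x.coeff n) :=
    aux5_root_zmod p _ (by rw [← map_pow, hx n])
  rw [aux5_c, dif_pos hex]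
  exact hex.choose_spec

noncomputable def aux5_Y (x : WittVector p S) (𝔭 : PrimeSpectrum S) : WittVector p (ZMod p) :=
  WittVector.mk p (fun n => aux5_c p x 𝔭 n)

theorem aux5_phi_inj (𝔭 : PrimeSpectrum S) :
    Function.Injective
      (WittVector.map (ZMod.castHom (dvd_refl p) (S ⧸ 𝔭.asIdeal)) :
        WittVector p (ZMod p) → WittVector p (S ⧸ 𝔭.asIdeal)) :=
  WittVector.map_injective _ (ZMod.castHom (dvd_refl p) (S ⧸ 𝔭.asIdeal)).injective

theorem aux5_Y_spec (x : WittVector p S) (hx : ∀ n, x.coeff n ^ p = x.coeff n)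
    (𝔭 : PrimeSpectrum S) :
    WittVector.map (ZMod.castHom (dvd_refl p) (S ⧸ 𝔭.asIdeal)) (aux5_Y p x 𝔭)
      = WittVector.map (Ideal.Quotient.mk 𝔭.asIdeal) x := by
  ext n
  rw [WittVector.map_coeff, WittVector.map_coeff, aux5_Y, WittVector.coeff_mk]
  exact aux5_c_spec p x hx 𝔭 n

theorem aux5_Y_unique (x : WittVector p S) (hx : ∀ n, x.coeff n ^ p = x.coeff n)
    (𝔭 : PrimeSpectrum S) (w : WittVector p (ZMod p))
    (hw : WittVector.map (ZMod.castHom (dvd_refl p) (S ⧸ 𝔭.asIdeal)) w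
      = WittVector.map (Ideal.Quotient.mk 𝔭.asIdeal) x) :
    aux5_Y p x 𝔭 = w :=
  aux5_phi_inj p 𝔭 (by rw [aux5_Y_spec p x hx 𝔭, hw])

end charp2

section charp3
variable (p : ℕ) [hp : Fact p.Prime] {S : Type} [CommRing S] [CharP S p]

theorem aux5_mem_fix {T : Type} [CommRing T]
    (x : RingHom.eqLocus (WittVector.frobenius : WittVector p T →+* WittVector p T)
      (RingHom.id (WittVector p T))) : WittVector.frobenius x.1 = x.1 := x.2

noncomputable def aux5_YHom (𝔭 : PrimeSpectrum S) :
    (RingHom.eqLocus (WittVector.frobenius : WittVector p S →+* WittVector p S)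
      (RingHom.id (WittVector p S))) →+* WittVector p (ZMod p) where
  toFun x := aux5_Y p x.1 𝔭
  map_one' := by
    refine aux5_Y_unique p _ (aux5_fix_coeff p _ (aux5_mem_fix p 1)) 𝔭 1 ?_
    show WittVector.map _ 1 = WittVector.map _ (1 : WittVector p S)
    rw [map_one, map_one]
  map_mul' x x' := by
    refine aux5_Y_unique p _ (aux5_fix_coeff p _ (aux5_mem_fix p (x * x'))) 𝔭 _ ?_
    show WittVector.map _ (aux5_Y p x.1 𝔭 * aux5_Y p x'.1 𝔭)
        = WittVector.map _ (x.1 * x'.1)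
    rw [map_mul, map_mul, aux5_Y_spec p _ (aux5_fix_coeff p _ (aux5_mem_fix p x)),
      aux5_Y_spec p _ (aux5_fix_coeff p _ (aux5_mem_fix p x'))]
  map_zero' := by
    refine aux5_Y_unique p _ (aux5_fix_coeff p _ (aux5_mem_fix p 0)) 𝔭 0 ?_
    show WittVector.map _ 0 = WittVector.map _ (0 : WittVector p S)
    rw [map_zero, map_zero]
  map_add' x x' := by
    refine aux5_Y_unique p _ (aux5_fix_coeff p _ (aux5_mem_fix p (x + x'))) 𝔭 _ ?_
    show WittVector.map _ (aux5_Y p x.1 𝔭 + aux5_Y p x'.1 𝔭)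
        = WittVector.map _ (x.1 + x'.1)
    rw [map_add, map_add, aux5_Y_spec p _ (aux5_fix_coeff p _ (aux5_mem_fix p x)),
      aux5_Y_spec p _ (aux5_fix_coeff p _ (aux5_mem_fix p x'))]

theorem aux5_toZModPow_congr (k : ℕ) (y y' : WittVector p (ZMod p))
    (h : ∀ n < k, y.coeff n = y'.coeff n) :
    WittVector.toZModPow p k y = WittVector.toZModPow p k y' := by
  show ((TruncatedWittVector.zmodEquivTrunc p k).symm.toRingHom.comp
    (WittVector.truncate k)) y = ((TruncatedWittVector.zmodEquivTrunc p k).symm.toRingHom.comp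
    (WittVector.truncate k)) y'
  simp only [RingHom.comp_apply]
  congr 1
  ext i
  rw [WittVector.coeff_truncate, WittVector.coeff_truncate]
  exact h i i.2

theorem aux5_padic_toZModPow (k : ℕ) (y : WittVector p (ZMod p)) :
    PadicInt.toZModPow k (WittVector.toPadicInt p y) = WittVector.toZModPow p k y :=
  RingHom.congr_fun (PadicInt.lift_spec (WittVector.toZModPow_compat p) k) y

theorem aux5_toZModPow_zero_coeff (k : ℕ) (y : WittVector p (ZMod p))
    (h : WittVector.toZModPow p k y = 0) : ∀ n < k, y.coeff n = 0 := by
  have htr : WittVector.truncate (p := p) k y = 0 := by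
    have h2 : (TruncatedWittVector.zmodEquivTrunc p k).symm (WittVector.truncate k y) = 0 := h
    have := congrArg (TruncatedWittVector.zmodEquivTrunc p k) h2
    rwa [RingEquiv.apply_symm_apply, map_zero] at this
  intro n hn
  have := congrArg (fun z => TruncatedWittVector.coeff ⟨n, hn⟩ z) htr
  simpa [WittVector.coeff_truncate] using this

end charp3

section charp4
variable (p : ℕ) [hp : Fact p.Prime] {S : Type} [CommRing S] [CharP S p]

theorem aux5_c_eq_iff (x : WittVector p S) (hx : ∀ n, x.coeff n ^ p = x.coeff n)
    (𝔭 : PrimeSpectrum S) (n : ℕ) (i : ZMod p) :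
    aux5_c p x 𝔭 n = i ↔ x.coeff n - ZMod.castHom (dvd_refl p) S i ∈ 𝔭.asIdeal := by
  have hcast : (Ideal.Quotient.mk 𝔭.asIdeal) (ZMod.castHom (dvd_refl p) S i)
      = ZMod.castHom (dvd_refl p) (S ⧸ 𝔭.asIdeal) i := by
    have : (Ideal.Quotient.mk 𝔭.asIdeal).comp (ZMod.castHom (dvd_refl p) S)
        = ZMod.castHom (dvd_refl p) (S ⧸ 𝔭.asIdeal) := Subsingleton.elim _ _
    exact RingHom.congr_fun this i
  constructor
  · rintro rfl
    rw [← Ideal.Quotient.eq_zero_iff_mem, map_sub, hcast, aux5_c_spec p x hx 𝔭 n, sub_self]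
  · intro h
    rw [← Ideal.Quotient.eq_zero_iff_mem, map_sub, hcast, sub_eq_zero] at h
    have := aux5_c_spec p x hx 𝔭 n
    rw [h] at this
    exact (ZMod.castHom (dvd_refl p) (S ⧸ 𝔭.asIdeal)).injective this

theorem aux5_c_fiber_closed (x : WittVector p S) (hx : ∀ n, x.coeff n ^ p = x.coeff n)
    (n : ℕ) (i : ZMod p) : IsClosed {𝔭 : PrimeSpectrum S | aux5_c p x 𝔭 n = i} := by
  have : {𝔭 : PrimeSpectrum S | aux5_c p x 𝔭 n = i}
      = PrimeSpectrum.zeroLocus {x.coeff n - ZMod.castHom (dvd_refl p) S i} := by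
    ext 𝔭
    rw [Set.mem_setOf_eq, aux5_c_eq_iff p x hx 𝔭 n i, PrimeSpectrum.mem_zeroLocus,
      Set.singleton_subset_iff]
    rfl
  rw [this]
  exact PrimeSpectrum.isClosed_zeroLocus _

theorem aux5_c_fiber_open (x : WittVector p S) (hx : ∀ n, x.coeff n ^ p = x.coeff n)
    (n : ℕ) (i : ZMod p) : IsOpen {𝔭 : PrimeSpectrum S | aux5_c p x 𝔭 n = i} := by
  rw [← isClosed_compl_iff]
  have : {𝔭 : PrimeSpectrum S | aux5_c p x 𝔭 n = i}ᶜ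
      = ⋃ j : {j : ZMod p // j ≠ i}, {𝔭 : PrimeSpectrum S | aux5_c p x 𝔭 n = j.1} := by
    ext 𝔭
    simp only [Set.mem_compl_iff, Set.mem_setOf_eq, Set.mem_iUnion]
    constructor
    · intro h; exact ⟨⟨aux5_c p x 𝔭 n, h⟩, rfl⟩
    · rintro ⟨⟨j, hj⟩, hj2⟩; rw [hj2]; exact hj
  rw [this]
  exact isClosed_iUnion_of_finite (fun j => aux5_c_fiber_closed p x hx n j.1)

theorem aux5_norm_le (k : ℕ) (a b : ℤ_[p])
    (h : PadicInt.toZModPow k a = PadicInt.toZModPow k b) :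
    ‖a - b‖ ≤ (p : ℝ) ^ (-(k : ℤ)) := by
  rw [PadicInt.norm_le_pow_iff_mem_span_pow, ← PadicInt.ker_toZModPow, RingHom.mem_ker,
    map_sub, h, sub_self]

theorem aux5_theta_continuous (x : WittVector p S) (hx : ∀ n, x.coeff n ^ p = x.coeff n) :
    Continuous (fun 𝔭 => WittVector.toPadicInt p (aux5_Y p x 𝔭)) := by
  rw [continuous_iff_continuousAt]
  intro 𝔭
  rw [ContinuousAt, Metric.tendsto_nhds]
  intro ε hε
  obtain ⟨k, hk⟩ : ∃ k : ℕ, (p : ℝ) ^ (-(k : ℤ)) < ε := by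
    have hp1 : (1 : ℝ) < p := by exact_mod_cast hp.1.one_lt
    obtain ⟨k, hk⟩ := exists_pow_lt_of_lt_one hε (by
      rw [inv_lt_one_iff₀]; right; exact hp1 : (p : ℝ)⁻¹ < 1)
    exact ⟨k, by rwa [zpow_neg, zpow_natCast, ← inv_pow]⟩
  have hV : IsOpen {𝔮 : PrimeSpectrum S | ∀ n < k, aux5_c p x 𝔮 n = aux5_c p x 𝔭 n} := by
    have : {𝔮 : PrimeSpectrum S | ∀ n < k, aux5_c p x 𝔮 n = aux5_c p x 𝔭 n}
        = ⋂ n ∈ Finset.range k, {𝔮 : PrimeSpectrum S | aux5_c p x 𝔮 n = aux5_c p x 𝔭 n} := by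
      ext 𝔮
      simp [Finset.mem_range]
    rw [this]
    exact isOpen_biInter_finset (fun n _ => aux5_c_fiber_open p x hx n _)
  have hmem : 𝔭 ∈ {𝔮 : PrimeSpectrum S | ∀ n < k, aux5_c p x 𝔮 n = aux5_c p x 𝔭 n} :=
    fun n _ => rfl
  filter_upwards [hV.mem_nhds hmem] with 𝔮 h𝔮
  have heq : PadicInt.toZModPow k (WittVector.toPadicInt p (aux5_Y p x 𝔮))
      = PadicInt.toZModPow k (WittVector.toPadicInt p (aux5_Y p x 𝔭)) := by
    rw [aux5_padic_toZModPow, aux5_padic_toZModPow]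
    refine aux5_toZModPow_congr p k _ _ (fun n hn => ?_)
    show (WittVector.mk p _).coeff n = (WittVector.mk p _).coeff n
    rw [WittVector.coeff_mk, WittVector.coeff_mk]
    exact h𝔮 n hn
  calc dist (WittVector.toPadicInt p (aux5_Y p x 𝔮)) (WittVector.toPadicInt p (aux5_Y p x 𝔭))
      = ‖WittVector.toPadicInt p (aux5_Y p x 𝔮) - WittVector.toPadicInt p (aux5_Y p x 𝔭)‖ :=
        dist_eq_norm _ _
    _ ≤ (p : ℝ) ^ (-(k : ℤ)) := aux5_norm_le p k _ _ heq
    _ < ε := hk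

noncomputable def aux5_Theta :
    (RingHom.eqLocus (WittVector.frobenius : WittVector p S →+* WittVector p S)
      (RingHom.id (WittVector p S))) →+* C(PrimeSpectrum S, ℤ_[p]) where
  toFun x := ⟨fun 𝔭 => WittVector.toPadicInt p (aux5_YHom p 𝔭 x),
    aux5_theta_continuous p x.1 (aux5_fix_coeff p _ (aux5_mem_fix p x))⟩
  map_one' := by ext 𝔭; show WittVector.toPadicInt p (aux5_YHom p 𝔭 1) = 1; rw [map_one, map_one]
  map_mul' x x' := by
    ext 𝔭
    show WittVector.toPadicInt p (aux5_YHom p 𝔭 (x * x'))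
      = WittVector.toPadicInt p (aux5_YHom p 𝔭 x) * WittVector.toPadicInt p (aux5_YHom p 𝔭 x')
    rw [map_mul, map_mul]
  map_zero' := by
    ext 𝔭; show WittVector.toPadicInt p (aux5_YHom p 𝔭 0) = 0; rw [map_zero, map_zero]
  map_add' x x' := by
    ext 𝔭
    show WittVector.toPadicInt p (aux5_YHom p 𝔭 (x + x'))
      = WittVector.toPadicInt p (aux5_YHom p 𝔭 x) + WittVector.toPadicInt p (aux5_YHom p 𝔭 x')
    rw [map_add, map_add]

end charp4

section charp5
variable (p : ℕ) [hp : Fact p.Prime] {S : Type} [CommRing S] [CharP S p]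

theorem aux5_nilpotent_fix_zero {A : Type} [CommRing A] (a : A) (ha : a ^ p = a)
    (hnil : IsNilpotent a) : a = 0 := by
  have hpow : ∀ j : ℕ, a ^ (p ^ j) = a := by
    intro j
    induction j with
    | zero => simp
    | succ j ih => rw [pow_succ, pow_mul, ih, ha]
  obtain ⟨m, hm⟩ := hnil
  have hlt : m < p ^ m := Nat.lt_pow_self (n := m) hp.1.one_lt
  calc a = a ^ (p ^ m) := (hpow m).symm
    _ = a ^ m * a ^ (p ^ m - m) := by rw [← pow_add]; congr 1; omega
    _ = 0 := by rw [hm, zero_mul]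

theorem aux5_theta_coeff_zero
    (x : RingHom.eqLocus (WittVector.frobenius : WittVector p S →+* WittVector p S)
      (RingHom.id (WittVector p S))) (k : ℕ)
    (h : ∀ 𝔭, PadicInt.toZModPow k ((aux5_Theta p x) 𝔭) = 0) :
    ∀ n < k, x.1.coeff n = 0 := by
  intro n hn
  have hfixc := aux5_fix_coeff p _ (aux5_mem_fix p x)
  have hmem : ∀ 𝔭 : PrimeSpectrum S, x.1.coeff n ∈ 𝔭.asIdeal := by
    intro 𝔭
    have h1 : WittVector.toZModPow p k (aux5_Y p x.1 𝔭) = 0 := by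
      rw [← aux5_padic_toZModPow]
      exact h 𝔭
    have h2 := aux5_toZModPow_zero_coeff p k _ h1 n hn
    rw [show (aux5_Y p x.1 𝔭).coeff n = aux5_c p x.1 𝔭 n by
      rw [aux5_Y, WittVector.coeff_mk]] at h2
    have h3 := aux5_c_spec p x.1 hfixc 𝔭 n
    rw [h2, map_zero] at h3
    exact (Ideal.Quotient.eq_zero_iff_mem).mp h3.symm
  have hnil : IsNilpotent (x.1.coeff n) :=
    nilpotent_iff_mem_prime.mpr (fun J hJ => hmem ⟨J, hJ⟩)
  exact aux5_nilpotent_fix_zero p _ (hfixc n) hnil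

theorem aux5_theta_injective : Function.Injective (aux5_Theta p (S := S)) := by
  intro x x' h
  have hd : aux5_Theta p (x - x') = 0 := by rw [map_sub, h, sub_self]
  have : ∀ n, (x - x').1.coeff n = 0 := by
    intro n
    refine aux5_theta_coeff_zero p (x - x') (n + 1) (fun 𝔭 => ?_) n (by omega)
    rw [hd]
    show PadicInt.toZModPow (n+1) ((0 : C(PrimeSpectrum S, ℤ_[p])) 𝔭) = 0
    rw [ContinuousMap.zero_apply, map_zero]
  have hzero : (x - x').1 = 0 := by ext n; rw [this n, WittVector.zero_coeff]
  have := sub_eq_zero.mp (show x.1 - x'.1 = 0 from hzero)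
  exact Subtype.ext this

-- congruence (α)
theorem aux5_theta_congr
    (x x' : RingHom.eqLocus (WittVector.frobenius : WittVector p S →+* WittVector p S)
      (RingHom.id (WittVector p S))) (k : ℕ)
    (h : ∀ n < k, x.1.coeff n = x'.1.coeff n) (𝔭 : PrimeSpectrum S) :
    PadicInt.toZModPow k ((aux5_Theta p x) 𝔭) = PadicInt.toZModPow k ((aux5_Theta p x') 𝔭) := by
  show PadicInt.toZModPow k (WittVector.toPadicInt p (aux5_Y p x.1 𝔭))
    = PadicInt.toZModPow k (WittVector.toPadicInt p (aux5_Y p x'.1 𝔭))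
  rw [aux5_padic_toZModPow, aux5_padic_toZModPow]
  refine aux5_toZModPow_congr p k _ _ (fun n hn => ?_)
  rw [aux5_Y, aux5_Y, WittVector.coeff_mk, WittVector.coeff_mk]
  have hc := aux5_c_spec p x.1 (aux5_fix_coeff p _ (aux5_mem_fix p x)) 𝔭 n
  have hc' := aux5_c_spec p x'.1 (aux5_fix_coeff p _ (aux5_mem_fix p x')) 𝔭 n
  rw [h n hn] at hc
  exact (ZMod.castHom (dvd_refl p) (S ⧸ 𝔭.asIdeal)).injective (by rw [hc, hc'])

end charp5

section charp6
variable (p : ℕ) [hp : Fact p.Prime] {S : Type} [CommRing S] [CharP S p]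

theorem aux5_frobenius_teichmuller (r : S) (hr : r ^ p = r) :
    WittVector.frobenius (WittVector.teichmuller p r) = WittVector.teichmuller p r := by
  ext n
  rw [WittVector.coeff_frobenius_charP]
  rcases Nat.eq_zero_or_pos n with rfl | hn
  · exact hr
  · show ((WittVector.teichmuller p r).coeff n) ^ p = _
    rw [WittVector.teichmuller_coeff_pos p r n hn]
    exact zero_pow hp.1.ne_zero

theorem aux5_isOpen_padic_fiber (k : ℕ) (v : ZMod (p ^ k)) :
    IsOpen {a : ℤ_[p] | PadicInt.toZModPow k a = v} := by
  rw [Metric.isOpen_iff]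
  intro a ha
  refine ⟨(p : ℝ) ^ (-(k : ℤ)), ?_, ?_⟩
  · have : (0:ℝ) < p := by exact_mod_cast hp.1.pos
    positivity
  · intro b hb
    rw [Metric.mem_ball, dist_eq_norm] at hb
    have hle : ‖b - a‖ ≤ (p : ℝ) ^ (-(k : ℤ)) := le_of_lt hb
    rw [PadicInt.norm_le_pow_iff_mem_span_pow, ← PadicInt.ker_toZModPow, RingHom.mem_ker,
      map_sub, sub_eq_zero] at hle
    show PadicInt.toZModPow k b = v
    rw [hle, ha]

theorem aux5_approx (g : C(PrimeSpectrum S, ℤ_[p])) (k : ℕ) :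
    ∃ x : RingHom.eqLocus (WittVector.frobenius : WittVector p S →+* WittVector p S)
      (RingHom.id (WittVector p S)),
      ∀ 𝔭, PadicInt.toZModPow k ((aux5_Theta p x) 𝔭) = PadicInt.toZModPow k (g 𝔭) := by
  classical
  set gk : PrimeSpectrum S → ZMod (p ^ k) := fun 𝔭 => PadicInt.toZModPow k (g 𝔭) with hgk
  have hclopen : ∀ v : ZMod (p ^ k), IsClopen (gk ⁻¹' {v}) := by
    intro v
    constructor
    · -- closed: complement is a union of open fibers
      rw [← isOpen_compl_iff]
      have : (gk ⁻¹' {v})ᶜ = ⋃ w : {w : ZMod (p ^ k) // w ≠ v}, gk ⁻¹' {w.1} := by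
        ext 𝔭
        simp only [Set.mem_compl_iff, Set.mem_preimage, Set.mem_singleton_iff, Set.mem_iUnion]
        constructor
        · intro h; exact ⟨⟨gk 𝔭, h⟩, rfl⟩
        · rintro ⟨⟨w, hw⟩, h2⟩; rw [h2]; exact hw
      rw [this]
      refine isOpen_iUnion (fun w => ?_)
      exact (aux5_isOpen_padic_fiber p k w.1).preimage g.continuous
    · exact (aux5_isOpen_padic_fiber p k v).preimage g.continuous
  choose e he hbasic using fun v : ZMod (p ^ k) =>
    PrimeSpectrum.exists_idempotent_basicOpen_eq_of_isClopen (hclopen v)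
  set x : WittVector p S := ∑ v : ZMod (p ^ k),
    ((v.val : ℕ) : WittVector p S) * WittVector.teichmuller p (e v) with hx
  have hep : ∀ v, (e v) ^ p = e v := fun v => by
    have h2 := (he v).pow_succ_eq (p - 1)
    rwa [Nat.sub_add_cancel hp.1.one_le] at h2
  have hfix : WittVector.frobenius x = x := by
    rw [hx, map_sum]
    refine Finset.sum_congr rfl (fun v _ => ?_)
    rw [map_mul, map_natCast, aux5_frobenius_teichmuller p (e v) (hep v)]
  refine ⟨⟨x, hfix⟩, fun 𝔭 => ?_⟩
  -- compute the value at 𝔭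
  set v0 : ZMod (p ^ k) := gk 𝔭 with hv0
  have hY : aux5_Y p x 𝔭 = ((v0.val : ℕ) : WittVector p (ZMod p)) := by
    refine aux5_Y_unique p x (aux5_fix_coeff p x hfix) 𝔭 _ ?_
    rw [map_natCast, hx, map_sum]
    have hterm : ∀ v : ZMod (p ^ k),
        WittVector.map (Ideal.Quotient.mk 𝔭.asIdeal)
          (((v.val : ℕ) : WittVector p S) * WittVector.teichmuller p (e v))
        = if v = v0 then ((v0.val : ℕ) : WittVector p (S ⧸ 𝔭.asIdeal)) else 0 := by
      intro v
      rw [map_mul, map_natCast, WittVector.map_teichmuller]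
      by_cases hv : v = v0
      · subst hv
        have hmem : 𝔭 ∈ PrimeSpectrum.basicOpen (e v0) := by
          rw [← SetLike.mem_coe, ← hbasic v0]
          show gk 𝔭 = v0
          rfl
        rw [PrimeSpectrum.mem_basicOpen] at hmem
        have hne : (Ideal.Quotient.mk 𝔭.asIdeal) (e v0) ≠ 0 := by
          rw [Ne, Ideal.Quotient.eq_zero_iff_mem]; exact hmem
        have hid : IsIdempotentElem ((Ideal.Quotient.mk 𝔭.asIdeal) (e v0)) := by
          have := congrArg (Ideal.Quotient.mk 𝔭.asIdeal) (he v0)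
          rw [map_mul] at this
          exact this
        have h1 : (Ideal.Quotient.mk 𝔭.asIdeal) (e v0) = 1 :=
          (IsIdempotentElem.iff_eq_zero_or_one.mp hid).resolve_left hne
        rw [h1, if_pos rfl]
        show _ * WittVector.teichmuller p 1 = _
        rw [map_one, mul_one]
      · have hmem : 𝔭 ∉ PrimeSpectrum.basicOpen (e v) := by
          rw [← SetLike.mem_coe, ← hbasic v]
          show ¬ (gk 𝔭 = v)
          exact fun h => hv (by rw [hv0, ← h])
        rw [PrimeSpectrum.mem_basicOpen, not_not] at hmem
        have h0 : (Ideal.Quotient.mk 𝔭.asIdeal) (e v) = 0 :=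
          Ideal.Quotient.eq_zero_iff_mem.mpr hmem
        rw [h0, WittVector.teichmuller_zero, mul_zero, if_neg hv]
    rw [Finset.sum_congr rfl (fun v _ => hterm v), Finset.sum_ite_eq' Finset.univ v0 _]
    rw [if_pos (Finset.mem_univ v0)]
  show PadicInt.toZModPow k (WittVector.toPadicInt p (aux5_Y p x 𝔭)) = _
  rw [hY, map_natCast, map_natCast]
  simp [ZMod.natCast_val, ZMod.cast_id]
  exact hv0
end charp6

section charp7
variable (p : ℕ) [hp : Fact p.Prime] {S : Type} [CommRing S] [CharP S p]

theorem aux5_theta_surjective : Function.Surjective (aux5_Theta p (S := S)) := by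
  intro g
  choose xs hxs using fun k => aux5_approx p g k
  -- stability of low coefficients
  have stab : ∀ k k' : ℕ, k ≤ k' → ∀ n < k, (xs k).1.coeff n = (xs k').1.coeff n := by
    intro k k' hk n hn
    have hδ : ∀ 𝔭, PadicInt.toZModPow k ((aux5_Theta p (xs k' - xs k)) 𝔭) = 0 := by
      intro 𝔭
      have h1 : (aux5_Theta p (xs k' - xs k)) 𝔭
          = (aux5_Theta p (xs k')) 𝔭 - (aux5_Theta p (xs k)) 𝔭 := by
        rw [map_sub]; rfl
      rw [h1, map_sub]
      have h2 : PadicInt.toZModPow k ((aux5_Theta p (xs k')) 𝔭)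
          = PadicInt.toZModPow k (g 𝔭) := by
        have h3 := hxs k' 𝔭
        have h4 := congrArg (fun t : ZMod (p ^ k') => (ZMod.cast t : ZMod (p ^ k))) h3
        rwa [PadicInt.cast_toZModPow k k' hk, PadicInt.cast_toZModPow k k' hk] at h4
      rw [h2, hxs k 𝔭, sub_self]
    have hc := aux5_theta_coeff_zero p (xs k' - xs k) k hδ
    -- conclude coefficients agree via truncation
    have htr : WittVector.truncate (p := p) k ((xs k').1 - (xs k).1) = 0 := by
      ext i
      rw [WittVector.coeff_truncate]
      have := hc i i.2
      simpa using this
    have htr2 : WittVector.truncate (p := p) k ((xs k').1)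
        = WittVector.truncate (p := p) k ((xs k).1) := by
      have := sub_eq_zero.mp (by rwa [map_sub] at htr)
      exact this
    have := congrArg (fun z => TruncatedWittVector.coeff ⟨n, hn⟩ z) htr2
    simpa [WittVector.coeff_truncate] using this.symm
  set xfun : ℕ → S := fun n => (xs (n + 1)).1.coeff n with hxfun
  set x : WittVector p S := WittVector.mk p xfun with hx
  have hxcoeff : ∀ n, x.coeff n = (xs (n+1)).1.coeff n := fun n => by
    rw [hx, WittVector.coeff_mk]
  have hfix : WittVector.frobenius x = x := by
    ext n
    rw [WittVector.coeff_frobenius_charP, hxcoeff n,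
      aux5_fix_coeff p _ (aux5_mem_fix p (xs (n+1))) n]
  refine ⟨⟨x, hfix⟩, ?_⟩
  ext 𝔭
  rw [← PadicInt.ext_of_toZModPow]
  intro k
  have hcongr : ∀ n < k, x.coeff n = (xs k).1.coeff n := by
    intro n hn
    rw [hxcoeff n]
    exact (stab (n+1) k (by omega) n (by omega)).symm ▸
      (stab (n+1) k (by omega) n (by omega)).symm
  calc PadicInt.toZModPow k ((aux5_Theta p ⟨x, hfix⟩) 𝔭)
      = PadicInt.toZModPow k ((aux5_Theta p (xs k)) 𝔭) :=
        aux5_theta_congr p _ _ k hcongr 𝔭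
    _ = PadicInt.toZModPow k (g 𝔭) := hxs k 𝔭

noncomputable def aux5_charPEquiv :
    (RingHom.eqLocus (WittVector.frobenius : WittVector p S →+* WittVector p S)
      (RingHom.id (WittVector p S))) ≃+* C(PrimeSpectrum S, ℤ_[p]) :=
  RingEquiv.ofBijective (aux5_Theta p) ⟨aux5_theta_injective p, aux5_theta_surjective p⟩
end charp7

section glue

/-- Precomposition with a homeomorphism as a ring equivalence on continuous function rings. -/
def aux5_compRingEquiv {X Y : Type} [TopologicalSpace X] [TopologicalSpace Y]
    {Z : Type} [TopologicalSpace Z] [Ring Z] [IsTopologicalRing Z] (h : X ≃ₜ Y) :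
    C(Y, Z) ≃+* C(X, Z) where
  toFun g := g.comp (h : C(X, Y))
  invFun g := g.comp (h.symm : C(Y, X))
  left_inv g := by ext y; simp
  right_inv g := by ext x; simp
  map_mul' g g' := by ext x; simp
  map_add' g g' := by ext x; simp

/-- Ring equivalence between two subsingleton rings. -/
def aux5_subsingletonEquiv (A B : Type) [Ring A] [Ring B] [Subsingleton A] [Subsingleton B] :
    A ≃+* B where
  toFun _ := 0
  invFun _ := 0
  left_inv a := Subsingleton.elim _ _
  right_inv b := Subsingleton.elim _ _
  map_mul' _ _ := Subsingleton.elim _ _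
  map_add' _ _ := Subsingleton.elim _ _

theorem aux5_spec_homeo {R : Type} [CommRing R] (I : Ideal R) (hI : I ≤ nilradical R) :
    ∃ h : PrimeSpectrum (R ⧸ I) ≃ₜ PrimeSpectrum R, True := by
  have hsurj : Function.Surjective (Ideal.Quotient.mk I) := Ideal.Quotient.mk_surjective
  have hcl := PrimeSpectrum.isClosedEmbedding_comap_of_surjective _ _ hsurj
  have hbij : Function.Bijective (PrimeSpectrum.comap (Ideal.Quotient.mk I)) := by
    refine ⟨hcl.injective, ?_⟩
    intro 𝔭
    have hrange := range_comap_of_surjective _ _ hsurj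
    have hmem : 𝔭 ∈ Set.range (PrimeSpectrum.comap (Ideal.Quotient.mk I)) := by
      rw [hrange, Ideal.mk_ker]
      rw [PrimeSpectrum.mem_zeroLocus]
      intro a ha
      obtain ⟨m, hm⟩ : IsNilpotent a := hI ha
      have hmem2 : a ^ m ∈ 𝔭.asIdeal := by rw [hm]; exact zero_mem _
      exact 𝔭.2.mem_of_pow_mem m hmem2
    obtain ⟨q, hq⟩ := hmem
    exact ⟨q, hq⟩
  exact ⟨(Equiv.ofBijective _ hbij).toHomeomorphOfIsInducing hcl.toIsInducing, trivial⟩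

end glue

theorem statement_5 (p : ℕ) [Fact p.Prime] (R : Type) [CommRing R]
    (hR : IsNilpotent (p : R)) :
    Nonempty
      ((RingHom.eqLocus (WittVector.frobenius : WittVector p R →+* WittVector p R)
          (RingHom.id (WittVector p R))) ≃+*
        C(PrimeSpectrum R, ℤ_[p])) := by
  rcases subsingleton_or_nontrivial R with hsub | hnt
  · haveI : Subsingleton (WittVector p R) :=
      ⟨fun a b => by ext n; exact Subsingleton.elim _ _⟩
    haveI : Subsingleton C(PrimeSpectrum R, ℤ_[p]) :=
      ⟨fun f g => ContinuousMap.ext fun x => isEmptyElim x⟩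
    exact ⟨aux5_subsingletonEquiv _ _⟩
  · obtain ⟨N, hN⟩ := hR
    have hN1 : 1 ≤ N := by
      rcases Nat.eq_zero_or_pos N with rfl | h
      · rw [pow_zero] at hN
        exact absurd hN one_ne_zero
      · exact h
    set J : Ideal R := Ideal.span {(p : R)} with hJ
    have hJtop : J ≠ ⊤ := by
      intro htop
      have h1 : (1 : R) ∈ J := htop ▸ Submodule.mem_top
      rw [hJ, Ideal.mem_span_singleton'] at h1
      obtain ⟨c, hc⟩ := h1
      have : (1 : R) = 0 := by
        calc (1:R) = 1 ^ N := (one_pow N).symm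
          _ = (c * (p:R)) ^ N := by rw [hc]
          _ = c ^ N * (p:R) ^ N := mul_pow _ _ _
          _ = 0 := by rw [hN, mul_zero]
      exact one_ne_zero this
    haveI hSnt : Nontrivial (R ⧸ J) := Ideal.Quotient.nontrivial_iff.mpr hJtop
    haveI hSchar : CharP (R ⧸ J) p := by
      rw [CharP.charP_iff_prime_eq_zero Fact.out]
      rw [← map_natCast (Ideal.Quotient.mk J) p]
      rw [Ideal.Quotient.eq_zero_iff_mem]
      exact Ideal.subset_span rfl
    have hker : RingHom.ker (Ideal.Quotient.mk J) = Ideal.span {(p : R)} := Ideal.mk_ker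
    have e1 := aux5_fixEquiv p (Ideal.Quotient.mk J) N Ideal.Quotient.mk_surjective hker hN1 hN
    have e2 := aux5_charPEquiv p (S := R ⧸ J)
    have hle : J ≤ nilradical R := by
      rw [hJ, Ideal.span_le, Set.singleton_subset_iff]
      exact ⟨N, hN⟩
    obtain ⟨h, -⟩ := aux5_spec_homeo J hle
    exact ⟨(e1.trans e2).trans (aux5_compRingEquiv h).symm⟩
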